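/- Let T be an invertible d×d matrix with singular value decomposition components: T = U' S' Rᵀ S⁻¹ Uᵀ where U, U', R are orthogonal and S, S' positive definite diagonal. Then Σ_{k=1}^d ‖S R S'⁻¹ U'ᵀ e_k‖² · ‖R S' U'ᵀ e_k‖² ≥ d⁻¹ (tr S)². -/

import Mathlib

open Matrix

/-- Core inequality for the FP loss: for orthogonal `U, U', R` and positive
diagonal `S, S'`,
`Σ_k ‖S R S'⁻¹ U'ᵀ e_k‖² · ‖R S' U'ᵀ e_k‖² ≥ d⁻¹ (tr S)²`. -/
theorem fp_loss_lower_bound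
    (d : ℕ) (hd : 0 < d)
    (U U' R : Matrix (Fin d) (Fin d) ℝ)
    (hU : U * Uᵀ = 1) (hU' : U' * U'ᵀ = 1) (hR : R * Rᵀ = 1)
    (s s' : Fin d → ℝ) (hs : ∀ k, 0 < s k) (hs' : ∀ k, 0 < s' k) :
    ∑ k : Fin d,
        (∑ j, ((Matrix.diagonal s * R * Matrix.diagonal (fun i => (s' i)⁻¹) * U'ᵀ).mulVec
          (Pi.single k 1) j) ^ 2) *
        (∑ j, ((R * Matrix.diagonal s' * U'ᵀ).mulVec (Pi.single k 1) j) ^ 2)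
      ≥ (d : ℝ)⁻¹ * (Matrix.trace (Matrix.diagonal s)) ^ 2 := by
  set A := Matrix.diagonal s * R * Matrix.diagonal (fun i => (s' i)⁻¹) * U'ᵀ with hA
  set B := R * Matrix.diagonal s' * U'ᵀ with hB
  set c : Fin d → ℝ := fun k => ∑ j, A j k * B j k with hc
  -- Step 1: sum of c equals trace S
  have hU'2 : U'ᵀ * U' = 1 := mul_eq_one_comm.mp hU'
  have hDD : Matrix.diagonal s' * Matrix.diagonal (fun i => (s' i)⁻¹) = 1 := by
    rw [Matrix.diagonal_mul_diagonal]
    have : (fun i => s' i * (s' i)⁻¹) = fun _ => (1:ℝ) := by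
      funext i; exact mul_inv_cancel₀ (hs' i).ne'
    rw [this, Matrix.diagonal_one]
  have htrace : ∑ k, c k = Matrix.trace (Matrix.diagonal s) := by
    have h1 : ∑ k, c k = Matrix.trace (Aᵀ * B) := by
      simp only [Matrix.trace, Matrix.diag, Matrix.mul_apply, Matrix.transpose_apply, hc]
      try rw [Finset.sum_comm]
    rw [h1, hA, hB]
    have hAT : (Matrix.diagonal s * R * Matrix.diagonal (fun i => (s' i)⁻¹) * U'ᵀ)ᵀ
        = U' * Matrix.diagonal (fun i => (s' i)⁻¹) * Rᵀ * Matrix.diagonal s := by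
      simp [Matrix.transpose_mul, Matrix.diagonal_transpose, Matrix.mul_assoc]
    rw [hAT]
    have : U' * Matrix.diagonal (fun i => (s' i)⁻¹) * Rᵀ * Matrix.diagonal s *
        (R * Matrix.diagonal s' * U'ᵀ)
        = U' * (Matrix.diagonal (fun i => (s' i)⁻¹) * (Rᵀ * Matrix.diagonal s * R *
          Matrix.diagonal s')) * U'ᵀ := by
      simp only [Matrix.mul_assoc]
    rw [this, Matrix.trace_mul_cycle, ← Matrix.mul_assoc, hU'2, Matrix.one_mul,
      Matrix.trace_mul_comm]
    have h2 : Rᵀ * Matrix.diagonal s * R * Matrix.diagonal s' *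
        Matrix.diagonal (fun i => (s' i)⁻¹) = Rᵀ * Matrix.diagonal s * R := by
      rw [Matrix.mul_assoc, hDD, Matrix.mul_one]
    rw [h2, Matrix.trace_mul_comm, ← Matrix.mul_assoc, hR, Matrix.one_mul]
  -- Step 2: Cauchy-Schwarz termwise
  have hterm : ∀ k, c k ^ 2 ≤ (∑ j, (A.mulVec (Pi.single k 1) j) ^ 2) *
      (∑ j, (B.mulVec (Pi.single k 1) j) ^ 2) := by
    intro k
    simp only [Matrix.mulVec_single, mul_one, MulOpposite.op_one, one_smul, Matrix.col_apply]
    exact Finset.sum_mul_sq_le_sq_mul_sq Finset.univ (fun j => A j k) (fun j => B j k)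
  have hCS2 : (∑ k, c k) ^ 2 ≤ (∑ k : Fin d, c k ^ 2) * d := by
    have := Finset.sum_mul_sq_le_sq_mul_sq Finset.univ c (fun _ => (1 : ℝ))
    simpa using this
  have hdpos : (0 : ℝ) < d := Nat.cast_pos.mpr hd
  calc (d : ℝ)⁻¹ * (Matrix.trace (Matrix.diagonal s)) ^ 2
      = (∑ k, c k) ^ 2 / d := by rw [htrace]; ring
    _ ≤ ∑ k : Fin d, c k ^ 2 := by
        rw [div_le_iff₀ hdpos]; exact hCS2
    _ ≤ _ := Finset.sum_le_sum fun k _ => hterm k
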